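/- Let d > 0 be squarefree with -d ≡ 1 (mod 4), let K = Q(√-d) have odd class number h, and let p ≡ 1 (mod 4) be a prime that splits as p·p̄ in K. Let π = a + b√-d (with 2a, 2b ∈ Z) generate p^h. Then the quadratic residue symbol of π modulo p̄ equals the quartic residue symbol ((-d)/p)₄, i.e. π^((p-1)/2) ≡ (-d)^((p-1)/4) (mod p̄). -/

import Mathlib

open NumberField NumberTheorySymbols

lemma sq_odd_mod8 (a : ℤ) (ha : Odd a) : ((a : ZMod 8))^2 = 1 := by
  obtain ⟨k, rfl⟩ := ha
  have h8 : (8:ℤ) ∣ (k+k+1)^2 - 1 := by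
    obtain ⟨m, hm⟩ := Int.even_mul_succ_self k
    exact ⟨m, by nlinarith [hm]⟩
  have := (ZMod.intCast_zmod_eq_zero_iff_dvd ((k+k+1)^2 - 1) 8).mpr h8
  push_cast at this ⊢
  linear_combination this

lemma sq_odd_mod4 (a : ℤ) (ha : Odd a) : ((a : ZMod 4))^2 = 1 := by
  obtain ⟨k, rfl⟩ := ha
  have h4 : (4:ℤ) ∣ (k+k+1)^2 - 1 := ⟨k*k+k, by ring⟩
  have := (ZMod.intCast_zmod_eq_zero_iff_dvd ((k+k+1)^2 - 1) 4).mpr h4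
  push_cast at this ⊢
  linear_combination this

lemma pow_odd_mod8 (p h : ℕ) (hp : Odd p) (hh : Odd h) :
    ((p : ZMod 8))^h = (p : ZMod 8) := by
  obtain ⟨m, rfl⟩ := hh
  have h2 : ((p : ZMod 8))^2 = 1 := by
    have := sq_odd_mod8 p ((Int.odd_coe_nat p).mpr hp)
    push_cast at this ⊢; exact this
  rw [pow_succ, pow_mul, h2, one_pow, one_mul]

lemma jacobi_v_eq_one (p d h : ℕ) (hp : p.Prime) (hp4 : p % 4 = 1) (hd4 : d % 4 = 3)
    (hh : Odd h) (u v : ℤ) (heq : u^2 + d * v^2 = 4 * p^h) (hpv : ¬ (p:ℤ) ∣ v) :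
    J(v | p) = 1 := by
  have hpodd : Odd p := by
    rw [Nat.odd_iff]; omega
  have hv0 : v ≠ 0 := fun h0 => hpv (h0 ▸ dvd_zero _)
  set n := v.natAbs with hn
  have hn0 : n ≠ 0 := Int.natAbs_ne_zero.mpr hv0
  set e := n.factorization 2 with he
  set w := n / 2 ^ e with hw
  have hnew : 2 ^ e * w = n := Nat.ordProj_mul_ordCompl_eq_self n 2
  have hw2 : ¬ 2 ∣ w := Nat.not_dvd_ordCompl Nat.prime_two hn0
  have hwodd : Odd w := Nat.odd_iff.mpr (Nat.not_even_iff.mp (fun hev => hw2 hev.two_dvd))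
  have hw0 : w ≠ 0 := fun h0 => hn0 (by rw [← hnew, h0, mul_zero])
  have hwn : w ∣ n := Dvd.intro_left _ hnew
  have hwv : (w:ℤ) ∣ v :=
    dvd_trans (Int.natCast_dvd_natCast.mpr hwn) (Int.natAbs_dvd.mpr (dvd_refl v))
  have hpw : ¬ p ∣ w := fun hd => hpv (dvd_trans (Int.natCast_dvd_natCast.mpr hd) hwv)
  -- gcd u w = 1
  have hgu : Int.gcd u (w:ℤ) = 1 := by
    by_contra hg
    have hgne : Int.gcd u (w:ℤ) ≠ 0 := by
      intro h0
      exact hw0 (by exact_mod_cast (Int.gcd_eq_zero_iff.mp h0).2)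
    obtain ⟨q, hq, hqd⟩ := Nat.exists_prime_and_dvd hg
    have hqu : (q:ℤ) ∣ u := dvd_trans (Int.natCast_dvd_natCast.mpr hqd) (Int.gcd_dvd_left _ _)
    have hqw : q ∣ w := by
      have := dvd_trans (Int.natCast_dvd_natCast.mpr hqd) (Int.gcd_dvd_right _ _)
      exact_mod_cast this
    have hqodd : q ≠ 2 := fun h2 => hw2 (h2 ▸ hqw)
    have hqv : (q:ℤ) ∣ v := dvd_trans (Int.natCast_dvd_natCast.mpr hqw) hwv
    have hq2 : (q:ℤ)^2 ∣ 4 * p^h := by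
      rw [← heq]
      exact dvd_add (pow_dvd_pow_of_dvd hqu 2) (Dvd.dvd.mul_left (pow_dvd_pow_of_dvd hqv 2) _)
    have hq2n : q^2 ∣ 4 * p^h := by exact_mod_cast hq2
    have hqp : q ∣ p^h := by
      have hq4' : q ∣ 4 * p^h := dvd_trans (dvd_pow_self q two_ne_zero) hq2n
      rcases (Nat.Prime.dvd_mul hq).mp hq4' with h4 | hqp
      · have h2 := hq.two_le
        have h4' := Nat.le_of_dvd (by norm_num) h4
        interval_cases q
        · exact absurd rfl hqodd
        · exact absurd h4 (by norm_num)
        · exact absurd hq (by norm_num)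
      · exact hqp
    have : q = p := (Nat.prime_dvd_prime_iff_eq hq hp).mp (hq.dvd_of_dvd_pow hqp)
    exact hpw (this ▸ hqw)
  have hpw' : Nat.Coprime p w := (Nat.Prime.coprime_iff_not_dvd hp).mpr hpw
  have hgpw : Int.gcd (p:ℤ) (w:ℤ) = 1 := by
    rw [Int.gcd_natCast_natCast]; exact hpw'
  -- J(w | p) = 1 via reciprocity
  have hJpw : J((p:ℤ) | w) = 1 := by
    have hmod : ((u^2 : ℤ)) % (w:ℤ) = ((4 * (p:ℤ)^h : ℤ)) % (w:ℤ) := by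
      have hdvd : (w:ℤ) ∣ (4 * (p:ℤ)^h) - u^2 := by
        have h' : (4 * (p:ℤ)^h) - u^2 = d * v^2 := by linarith
        rw [h']; exact Dvd.dvd.mul_left (hwv.trans (dvd_pow_self v two_ne_zero)) _
      exact Int.modEq_iff_dvd.mpr hdvd
    have h1 : J((u^2 : ℤ) | w) = 1 := jacobiSym.sq_one' hgu
    have h4w : J((4:ℤ) | w) = 1 := by
      rw [show (4:ℤ) = 2^2 by norm_num]
      refine jacobiSym.sq_one' ?_
      rw [show ((2:ℤ)) = ((2:ℕ):ℤ) by norm_num, Int.gcd_natCast_natCast]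
      exact (Nat.Prime.coprime_iff_not_dvd Nat.prime_two).mpr hw2
    have hkey : J((p:ℤ) | w)^h = 1 := by
      have e1 : J((p:ℤ) | w)^h = J(((p:ℤ)^h) | w) := (jacobiSym.pow_left _ _ _).symm
      have e2 : J(((4:ℤ) * (p:ℤ)^h) | w) = J((4:ℤ)|w) * J(((p:ℤ)^h) | w) :=
        jacobiSym.mul_left _ _ _
      have e3 : J(((4:ℤ) * (p:ℤ)^h) | w) = J((u^2:ℤ) | w) := jacobiSym.mod_left' hmod.symm
      calc J((p:ℤ) | w)^h = J(((p:ℤ)^h) | w) := e1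
        _ = J((4:ℤ)|w) * J(((p:ℤ)^h) | w) := by rw [h4w, one_mul]
        _ = J(((4:ℤ) * (p:ℤ)^h) | w) := e2.symm
        _ = J((u^2:ℤ) | w) := e3
        _ = 1 := h1
    rcases jacobiSym.eq_one_or_neg_one hgpw with h1' | h1'
    · exact h1'
    · rw [h1', Odd.neg_one_pow hh] at hkey; norm_num at hkey
  have hJwp : J(((w:ℕ):ℤ) | p) = 1 := by
    rw [← jacobiSym.quadratic_reciprocity_one_mod_four hp4 hwodd]; exact hJpw
  have hp4' : ((p : ZMod 4)) = 1 := by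
    have h' := ZMod.natCast_mod p 4
    rw [hp4] at h'; rw [← h']; norm_num
  -- J(2|p)^e = 1
  have hJ2 : J((2:ℤ) | p)^e = 1 := by
    have hg2p : Int.gcd (2:ℤ) ((p:ℕ):ℤ) = 1 := by
      rw [show ((2:ℤ)) = ((2:ℕ):ℤ) by norm_num, Int.gcd_natCast_natCast]
      exact Nat.coprime_two_left.mpr hpodd
    rcases Nat.even_or_odd e with hev | hodd_e
    · obtain ⟨t, ht⟩ := hev
      rw [ht, ← two_mul, pow_mul, jacobiSym.sq_one hg2p, one_pow]
    · -- e odd: show p % 8 = 1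
      have he1 : 1 ≤ e := hodd_e.pos
      have h2n : 2 ∣ n := dvd_trans (dvd_pow_self 2 (Nat.one_le_iff_ne_zero.mp he1)) ⟨w, hnew.symm⟩
      have h2v : (2:ℤ) ∣ v := dvd_trans (by exact_mod_cast h2n : (2:ℤ) ∣ (n:ℤ))
        (Int.natAbs_dvd.mpr (dvd_refl v))
      obtain ⟨b, hb⟩ := h2v
      have h2u : (2:ℤ) ∣ u := by
        have h4u : (4:ℤ) ∣ u^2 := by
          have h' : u^2 = 4 * (p:ℤ)^h - d * (2*b)^2 := by rw [← hb]; linarith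
          rw [h']
          exact dvd_sub (Dvd.intro _ rfl) ⟨d * b^2, by ring⟩
        exact Int.prime_two.dvd_of_dvd_pow (dvd_trans (by norm_num) h4u : (2:ℤ) ∣ u^2)
      obtain ⟨a, ha⟩ := h2u
      have heq2 : a^2 + d * b^2 = (p:ℤ)^h := by
        have h4 : (4:ℤ) * (a^2 + d * b^2) = 4 * (p:ℤ)^h := by
          rw [← heq, ha, hb]; ring
        exact mul_left_cancel₀ (by norm_num) h4
      have hbabs : b.natAbs = 2^(e-1) * w := by
        have hnn : n = 2 * b.natAbs := by
          rw [hn, hb, Int.natAbs_mul]; norm_num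
        have h2e : 2^e = 2 * 2^(e-1) := by
          rw [← pow_succ']
          congr 1
          omega
        have : 2 * b.natAbs = 2 * (2^(e-1) * w) := by
          rw [← hnn, ← hnew, h2e]; ring
        omega
      have hp8 : ((p : ZMod 8)) = 1 := by
        rcases Nat.lt_or_ge e 2 with he2 | he2
        · -- e = 1 : contradiction
          exfalso
          have he1' : e = 1 := by omega
          have hbodd : Odd b := by
            rw [← Int.natAbs_odd, hbabs, he1']
            simpa using hwodd
          -- cast heq2 to ZMod 4
          have hc : ((a : ZMod 4))^2 + (d : ZMod 4) * ((b : ZMod 4))^2 = ((p:ZMod 4))^h := by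
            have := congrArg (fun z : ℤ => (z : ZMod 4)) heq2
            push_cast at this
            exact this
          have hd' : ((d : ZMod 4)) = 3 := by
            have h' := ZMod.natCast_mod d 4
            rw [hd4] at h'; rw [← h']; norm_num
          rw [hd', sq_odd_mod4 b hbodd, hp4', one_pow] at hc
          have : ((a : ZMod 4))^2 = 2 := by
            have h4 : ((4:ZMod 4)) = 0 := by decide
            linear_combination hc - h4
          have hsq : ∀ z : ZMod 4, z^2 ≠ 2 := by decide
          exact hsq _ this
        ·
          -- we use e ≥ 3 (odd and ≥ 2)
          have he3 : 3 ≤ e := by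
            rcases hodd_e with ⟨t, ht'⟩; omega
          have h4b : (4:ℤ) ∣ b := by
            have : (4:ℕ) ∣ b.natAbs := by
              rw [hbabs]
              exact Dvd.dvd.mul_right (by
                have : (2:ℕ)^2 ∣ 2^(e-1) := pow_dvd_pow 2 (by omega)
                simpa using this) w
            exact Int.dvd_natAbs.mp (by exact_mod_cast this)
          obtain ⟨c, hc'⟩ := h4b
          have haodd : Odd a := by
            rcases Int.even_or_odd a with hev' | hodd'
            · exfalso
              obtain ⟨a', ha'⟩ := hev'
              have : (2:ℤ) ∣ (p:ℤ)^h := by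
                rw [← heq2, ha', hc']
                exact dvd_add ⟨2*a'^2, by ring⟩ ⟨d*8*c^2, by ring⟩
              have h2p : (2:ℕ) ∣ p^h := by exact_mod_cast this
              have := Nat.Prime.dvd_of_dvd_pow Nat.prime_two h2p
              omega
            · exact hodd'
          have hc8 : ((a : ZMod 8))^2 + (d : ZMod 8) * ((b : ZMod 8))^2 = ((p:ZMod 8))^h := by
            have := congrArg (fun z : ℤ => (z : ZMod 8)) heq2
            push_cast at this
            exact this
          have hb8 : ((b : ZMod 8))^2 = 0 := by
            rw [hc']
            push_cast
            have h8 : ((8:ZMod 8)) = 0 := by decide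
            linear_combination (2*((c:ZMod 8))^2) * h8
          rw [hb8, mul_zero, add_zero, sq_odd_mod8 a haodd, pow_odd_mod8 p h hpodd hh] at hc8
          exact hc8.symm
      rw [jacobiSym.at_two hpodd]
      have : ZMod.χ₈ ((p : ZMod 8)) = 1 := by rw [hp8]; decide
      rw [this, one_pow]
  -- assemble
  have hn' : ((n : ℕ):ℤ) = (2:ℤ)^e * ((w:ℕ):ℤ) := by
    rw [← hnew]; push_cast; ring
  have hJn : J(((n:ℕ):ℤ) | p) = 1 := by
    rw [hn', jacobiSym.mul_left, jacobiSym.pow_left, hJ2, hJwp, mul_one]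
  rcases Int.natAbs_eq v with hv | hv
  · rw [show v = ((n:ℕ):ℤ) from hv]; exact hJn
  · rw [show v = -((n:ℕ):ℤ) from hv, ← neg_one_mul, jacobiSym.mul_left, hJn, mul_one]
    rw [jacobiSym.at_neg_one hpodd]
    rw [show ZMod.χ₄ ((p : ZMod 4)) = 1 by rw [hp4']; decide]

lemma core_dvd (p d h : ℕ) (hp : p.Prime) (hp4 : p % 4 = 1) (hd4 : d % 4 = 3)
    (hh : Odd h) (u v : ℤ) (heq : u^2 + d * v^2 = 4 * p^h) (hpv : ¬ (p:ℤ) ∣ v) :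
    (p:ℤ) ∣ u ^ ((p - 1) / 2) - (-(d:ℤ)) ^ ((p - 1) / 4) := by
  haveI : Fact p.Prime := ⟨hp⟩
  have hJ := jacobi_v_eq_one p d h hp hp4 hd4 hh u v heq hpv
  have hleg : legendreSym p v = 1 := by
    rw [jacobiSym.legendreSym.to_jacobiSym]; exact hJ
  have hv : ((v : ZMod p)) ^ (p / 2) = 1 := by
    have h' := legendreSym.eq_pow p v
    rw [hleg] at h'; exact_mod_cast h'.symm
  have hp5 : 5 ≤ p := by
    have h2 := hp.two_le
    rcases Nat.lt_or_ge p 5 with h5 | h5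
    · interval_cases p <;> omega
    · exact h5
  set k := (p-1)/4 with hk
  have hk2 : (p-1)/2 = 2 * k := by omega
  have hpk : p / 2 = 2 * k := by omega
  have hh0 : h ≠ 0 := by rcases hh with ⟨t, ht⟩; omega
  have hcast : ((u:ZMod p))^2 + (d:ZMod p) * ((v:ZMod p))^2 = 0 := by
    have h' := congrArg (fun z : ℤ => (z : ZMod p)) heq
    push_cast at h'
    rw [ZMod.natCast_self, zero_pow hh0, mul_zero] at h'
    exact h'
  have hu2 : ((u:ZMod p))^2 = -((d:ZMod p)) * ((v:ZMod p))^2 := by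
    linear_combination hcast
  have hgoal : ((u:ZMod p))^((p-1)/2) = (-((d:ZMod p)))^k := by
    rw [hk2, pow_mul, hu2, mul_pow, ← pow_mul, ← hpk, hv, mul_one]
  rw [← ZMod.intCast_zmod_eq_zero_iff_dvd]
  push_cast
  rw [sub_eq_zero]
  exact hgoal

lemma exists_int_of_squarefree_denom (d : ℕ) (hd : Squarefree d) (q : ℚ) (c : ℤ)
    (h : (d:ℚ) * q^2 = (c:ℚ)) : ∃ V : ℤ, (V:ℚ) = q := by
  have hden : ((q.den:ℚ)) ≠ 0 := by
    exact_mod_cast q.den_pos.ne'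
  have h0 : (d:ℚ) * (q.num:ℚ)^2 = (c:ℚ) * (q.den:ℚ)^2 := by
    have hq := Rat.num_div_den q
    rw [← hq] at h
    field_simp at h
    linear_combination h
  have hZ : (d:ℤ) * q.num^2 = c * (q.den:ℤ)^2 := by exact_mod_cast h0
  have hdvd : ((q.den:ℤ))^2 ∣ (d:ℤ) * q.num^2 := ⟨c, by linarith⟩
  have hcop : IsCoprime ((q.den:ℤ)) (q.num) := by
    rw [Int.isCoprime_iff_gcd_eq_one, Int.gcd]
    simpa [Nat.coprime_comm] using q.reduced
  have hdvd2 : ((q.den:ℤ))^2 ∣ (d:ℤ) := by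
    have hcop2 : IsCoprime (((q.den:ℤ))^2) (q.num^2) := (hcop.pow)
    exact hcop2.dvd_of_dvd_mul_right hdvd
  have hdvdn : (q.den * q.den) ∣ d := by
    have : ((q.den * q.den : ℕ) : ℤ) ∣ (d:ℤ) := by push_cast; rw [← sq]; exact hdvd2
    exact_mod_cast this
  have hden1 : q.den = 1 := Nat.isUnit_iff.mp (hd q.den hdvdn)
  refine ⟨q.num, ?_⟩
  rw [← Rat.num_div_den q, hden1]
  simp

set_option maxHeartbeats 2000000 in
/-- Let `d > 0` be squarefree with `-d ≡ 1 (mod 4)` (i.e. `d ≡ 3 (mod 4)`), let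
`K = ℚ(√-d)` have odd class number `h`, and let `p ≡ 1 (mod 4)` be a prime splitting
as `P·P̄` in `K`. If `π` generates `P^h`, then the quadratic residue symbol of `π`
modulo `P̄` equals the quartic residue symbol `((-d)/p)₄`, i.e.
`π^((p-1)/2) ≡ (-d)^((p-1)/4) (mod P̄)`. -/
theorem quadratic_symbol_eq_quartic_symbol
    (d : ℕ) (hdpos : 0 < d) (hd : Squarefree d) (hd4 : d % 4 = 3)
    (K : Type) [Field K] [NumberField K]
    (hdeg : Module.finrank ℚ K = 2)
    (s : 𝓞 K) (hs : s ^ 2 = -(d : 𝓞 K))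
    (hodd : Odd (classNumber K))
    (p : ℕ) (hp : p.Prime) (hp4 : p % 4 = 1)
    (hdisc : ¬ (p : ℤ) ∣ discr K)
    (P Pb : Ideal (𝓞 K)) (hP : P.IsPrime) (hPb : Pb.IsPrime) (hPPb : P ≠ Pb)
    (hsplit : Ideal.span {(p : 𝓞 K)} = P * Pb)
    (π : 𝓞 K) (hgen : Ideal.span {π} = P ^ classNumber K) :
    π ^ ((p - 1) / 2) - (-(d : 𝓞 K)) ^ ((p - 1) / 4) ∈ Pb := by
  set h := classNumber K with hh'
  have hh0 : h ≠ 0 := by rcases hodd with ⟨t, ht⟩; omega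
  -- basic ideal facts
  have hpP : (p : 𝓞 K) ∈ P := Ideal.mul_le_left (I := P) (J := Pb) (by rw [← hsplit]; exact Ideal.mem_span_singleton_self _)
  have hpPb : (p : 𝓞 K) ∈ Pb := Ideal.mul_le_right (I := P) (J := Pb) (by rw [← hsplit]; exact Ideal.mem_span_singleton_self _)
  have hpne : (p : 𝓞 K) ≠ 0 := Nat.cast_ne_zero.mpr hp.ne_zero
  have hPbot : P ≠ ⊥ := fun hb => hpne (by rw [hb] at hpP; exact hpP)
  have hPbbot : Pb ≠ ⊥ := fun hb => hpne (by rw [hb] at hpPb; exact hpPb)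
  have hPmax : P.IsMaximal := Ideal.IsPrime.isMaximal hP hPbot
  have hPbmax : Pb.IsMaximal := Ideal.IsPrime.isMaximal hPb hPbbot
  -- K-side objects
  set A : ℚ →+* K := algebraMap ℚ K with hA
  set sK : K := algebraMap (𝓞 K) K s with hsKdef
  have hsK : sK ^ 2 = -(d : K) := by
    rw [hsKdef, ← map_pow, hs, map_neg, map_natCast]
  have hsA : sK ^ 2 = -(A (d : ℚ)) := by rw [hsK, map_natCast]
  -- 1, sK linearly independent
  have hs_not_rat : ∀ r : ℚ, A r ≠ sK := by
    intro r hr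
    have h2 : (A r) ^ 2 = -(A (d:ℚ)) := by rw [hr]; exact hsA
    rw [← map_pow, ← map_neg] at h2
    have h3 : r ^ 2 = -(d:ℚ) := A.injective h2
    have h4 : (0:ℚ) ≤ r^2 := sq_nonneg r
    have h5 : (0:ℚ) < d := by exact_mod_cast hdpos
    rw [h3] at h4; linarith
  have hli : LinearIndependent ℚ ![(1:K), sK] := by
    rw [linearIndependent_fin2]
    constructor
    · simp only [Matrix.cons_val_one, Matrix.head_cons]
      intro h0
      have : sK ^ 2 = 0 := by rw [show sK = 0 from h0]; ring
      rw [hsK] at this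
      have : (d:K) = 0 := by linear_combination -this
      have : (d:ℚ) = 0 := by exact_mod_cast this
      have : (0:ℚ) < d := by exact_mod_cast hdpos
      linarith [‹(d:ℚ) = 0›]
    · intro a ha
      simp only [Matrix.cons_val_one, Matrix.head_cons, Matrix.cons_val_zero] at ha
      have ha0 : a ≠ 0 := by
        intro h0; rw [h0, zero_smul] at ha; exact one_ne_zero ha.symm
      apply hs_not_rat a⁻¹
      have hsk : sK = a⁻¹ • (1:K) := by
        rw [← ha, smul_smul, inv_mul_cancel₀ ha0, one_smul]
      rw [hsk, Algebra.smul_def, mul_one]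
  let B : Module.Basis (Fin 2) ℚ K :=
    basisOfLinearIndependentOfCardEqFinrank hli (by simp [hdeg])
  have hBc : ⇑B = ![(1:K), sK] := coe_basisOfLinearIndependentOfCardEqFinrank hli _
  have hB0 : B 0 = 1 := by rw [hBc]; rfl
  have hB1 : B 1 = sK := by rw [hBc]; rfl
  set x : ℚ := B.repr (algebraMap (𝓞 K) K π) 0 with hx
  set y : ℚ := B.repr (algebraMap (𝓞 K) K π) 1 with hy
  set πK : K := algebraMap (𝓞 K) K π with hπK
  have hπA : πK = A x + A y * sK := by
    have := B.sum_repr πK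
    rw [Fin.sum_univ_two, hB0, hB1] at this
    rw [← this, Algebra.smul_def, Algebra.smul_def, mul_one]
  -- repr of generic combination
  have hrepr : ∀ (c₀ c₁ : ℚ) (i : Fin 2), B.repr (A c₀ + A c₁ * sK) i = ![c₀, c₁] i := by
    intro c₀ c₁ i
    have e : A c₀ + A c₁ * sK = c₀ • B 0 + c₁ • B 1 := by
      rw [hB0, hB1, Algebra.smul_def, Algebra.smul_def, mul_one]
    rw [e, map_add, map_smul, map_smul, B.repr_self, B.repr_self]
    fin_cases i <;> simp
  -- trace = 2x
  have htr : Algebra.trace ℚ K πK = 2 * x := by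
    rw [Algebra.trace_eq_matrix_trace B, Matrix.trace_fin_two]
    have e00 : Algebra.leftMulMatrix B πK 0 0 = x := by
      rw [Algebra.leftMulMatrix_eq_repr_mul, hB0, mul_one, hπA, hrepr]
      rfl
    have e11 : Algebra.leftMulMatrix B πK 1 1 = x := by
      rw [Algebra.leftMulMatrix_eq_repr_mul, hB1]
      have e : πK * sK = A (-(d:ℚ)*y) + A x * sK := by
        rw [hπA]
        have : A (-(d:ℚ)*y) = -(A (d:ℚ)) * A y := by rw [map_mul, map_neg]
        rw [this, ← hsA]; ring
      rw [e, hrepr]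
      rfl
    rw [e00, e11]; ring
  -- norm = x² + d y²
  have hnormQ : Algebra.norm ℚ πK = x^2 + (d:ℚ) * y^2 := by
    rw [Algebra.norm_eq_matrix_det B, Matrix.det_fin_two]
    have e00 : Algebra.leftMulMatrix B πK 0 0 = x := by
      rw [Algebra.leftMulMatrix_eq_repr_mul, hB0, mul_one, hπA, hrepr]; rfl
    have e10 : Algebra.leftMulMatrix B πK 1 0 = y := by
      rw [Algebra.leftMulMatrix_eq_repr_mul, hB0, mul_one, hπA, hrepr]; rfl
    have eprod : πK * sK = A (-(d:ℚ)*y) + A x * sK := by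
      rw [hπA]
      have : A (-(d:ℚ)*y) = -(A (d:ℚ)) * A y := by rw [map_mul, map_neg]
      rw [this, ← hsA]; ring
    have e01 : Algebra.leftMulMatrix B πK 0 1 = -(d:ℚ)*y := by
      rw [Algebra.leftMulMatrix_eq_repr_mul, hB1, eprod, hrepr]; rfl
    have e11 : Algebra.leftMulMatrix B πK 1 1 = x := by
      rw [Algebra.leftMulMatrix_eq_repr_mul, hB1, eprod, hrepr]; rfl
    rw [e00, e01, e10, e11]; ring
  -- absNorm of P is p
  have hπ0 : π ≠ 0 := by
    intro h0
    rw [h0] at hgen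
    have : P ^ h ≠ ⊥ := pow_ne_zero h hPbot
    exact this (by rw [← hgen]; simp)
  have hNPNPb : Ideal.absNorm P * Ideal.absNorm Pb = p ^ 2 := by
    have e1 : Ideal.absNorm (P * Pb) = Ideal.absNorm P * Ideal.absNorm Pb := map_mul _ _ _
    rw [← hsplit] at e1
    rw [← e1, Ideal.absNorm_span_singleton]
    have e2 : (p : 𝓞 K) = algebraMap ℤ (𝓞 K) (p:ℤ) := by simp
    rw [e2, Algebra.norm_algebraMap_of_basis (NumberField.RingOfIntegers.basis K)]
    have hcard : Fintype.card (Module.Free.ChooseBasisIndex ℤ (𝓞 K)) = 2 := by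
      rw [← Module.finrank_eq_card_basis (NumberField.RingOfIntegers.basis K),
        NumberField.RingOfIntegers.rank, hdeg]
    rw [hcard]
    simp [Int.natAbs_pow]
  have hNP : Ideal.absNorm P = p := by
    have hNP1 : Ideal.absNorm P ≠ 1 := fun h1 => hP.ne_top (Ideal.absNorm_eq_one_iff.mp h1)
    have hNPb1 : Ideal.absNorm Pb ≠ 1 := fun h1 => hPb.ne_top (Ideal.absNorm_eq_one_iff.mp h1)
    have hd1 : Ideal.absNorm P ∣ p ^ 2 := ⟨Ideal.absNorm Pb, hNPNPb.symm⟩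
    obtain ⟨m, hm2, hm⟩ := (Nat.dvd_prime_pow hp).mp hd1
    interval_cases m
    · rw [pow_zero] at hm; exact absurd hm hNP1
    · simpa using hm
    · exfalso
      rw [hm] at hNPNPb
      have hp2 : (0:ℕ) < p ^ 2 := pow_pos hp.pos 2
      have heq1 : p ^ 2 * Ideal.absNorm Pb = p ^ 2 * 1 := by simpa using hNPNPb
      exact hNPb1 (Nat.eq_of_mul_eq_mul_left hp2 heq1)
  have habs : (Algebra.norm ℤ π).natAbs = p ^ h := by
    rw [← Ideal.absNorm_span_singleton, hgen, map_pow, hNP]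
  -- norm is nonneg, hence = p^h
  have hnormint : Algebra.norm ℤ π = (p:ℤ) ^ h := by
    have hge : (0:ℚ) ≤ (Algebra.norm ℤ π : ℚ) := by
      rw [Algebra.coe_norm_int]
      have hcoe : (π : K) = algebraMap (𝓞 K) K π := rfl
      rw [hcoe, ← hπK, hnormQ]
      positivity
    have hge' : (0:ℤ) ≤ Algebra.norm ℤ π := by exact_mod_cast hge
    have := Int.natAbs_of_nonneg hge'
    rw [← this, habs]; push_cast; ring
  have hM : x^2 + (d:ℚ) * y^2 = (p:ℚ)^h := by
    have hcoe : (π : K) = algebraMap (𝓞 K) K π := rfl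
    rw [← hnormQ, hπK, ← hcoe, ← Algebra.coe_norm_int, hnormint]; push_cast; ring
  -- the trace integer U
  set U : ℤ := Algebra.trace ℤ (𝓞 K) π with hUdef
  have hU : (U : ℚ) = 2 * x := by
    have hcoe : (π : K) = algebraMap (𝓞 K) K π := rfl
    rw [hUdef, Algebra.coe_trace_int, hcoe, ← hπK, htr]
  -- the integer V with (V:ℚ) = 2y
  obtain ⟨V, hV⟩ : ∃ V : ℤ, (V:ℚ) = 2*y := by
    apply exists_int_of_squarefree_denom d hd (2*y) (4*(p:ℤ)^h - U^2)
    push_cast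
    linear_combination 4*hM + ((U:ℚ) + 2*x) * hU
  have heqZ : U^2 + (d:ℤ) * V^2 = 4 * (p:ℤ)^h := by
    have hQ : (U:ℚ)^2 + (d:ℚ)*(V:ℚ)^2 = 4*(p:ℚ)^h := by
      rw [hU, hV]
      linear_combination 4*hM
    exact_mod_cast hQ
  -- the conjugate element
  set π' : 𝓞 K := (U : 𝓞 K) - π with hπ'def
  have hinj : Function.Injective (algebraMap (𝓞 K) K) := IsFractionRing.injective (𝓞 K) K
  have hUK : algebraMap (𝓞 K) K ((U : 𝓞 K)) = A (2*x) := by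
    have e1 : algebraMap (𝓞 K) K ((U : 𝓞 K)) = (U : K) := map_intCast _ U
    have e2 : A ((U:ℚ)) = (U : K) := map_intCast _ U
    rw [e1, ← e2, hU]
  have hprod : π * π' = (p : 𝓞 K)^h := by
    apply hinj
    rw [map_mul, map_pow, hπ'def, map_sub, hUK, ← hπK, hπA]
    have hpK : algebraMap (𝓞 K) K ((p : 𝓞 K)) = A ((p:ℚ)) := by
      rw [map_natCast, map_natCast]
    rw [hpK, ← map_pow]
    have hM2 : A (x^2 + (d:ℚ)*y^2) = A ((p:ℚ)^h) := congrArg A hM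
    rw [map_add, map_mul, map_pow, map_pow] at hM2
    have hAd2 : A (2*x) = 2 * A x := by rw [map_mul]; norm_num
    rw [hAd2]
    linear_combination hM2 + (-(A y)^2) * hsA
  -- span of conjugate
  have hspan' : Ideal.span {π'} = Pb ^ h := by
    have e1 : Ideal.span {π} * Ideal.span {π'} = Ideal.span {π * π'} :=
      Ideal.span_singleton_mul_span_singleton _ _
    rw [hprod, hgen, ← Ideal.span_singleton_pow, hsplit, mul_pow] at e1
    exact mul_left_cancel₀ (pow_ne_zero h (fun hb => hPbot (by exact_mod_cast hb))) e1
  have hπ'Pb : π' ∈ Pb := by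
    have : π' ∈ Ideal.span {π'} := Ideal.mem_span_singleton_self _
    rw [hspan'] at this
    exact Ideal.pow_le_self hh0 this
  -- p does not divide V
  have hpV : ¬ (p:ℤ) ∣ V := by
    intro hdvdV
    have hpZ : Prime ((p:ℤ)) := Nat.prime_iff_prime_int.mp hp
    have hpU : (p:ℤ) ∣ U := by
      have h1 : (p:ℤ) ∣ U^2 := by
        have e : U^2 = 4*(p:ℤ)^h - (d:ℤ)*V^2 := by linear_combination heqZ
        rw [e]
        exact dvd_sub (Dvd.dvd.mul_left (dvd_pow_self _ hh0) 4)
          (Dvd.dvd.mul_left (dvd_trans hdvdV (dvd_pow_self V two_ne_zero)) _)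
      exact hpZ.dvd_of_dvd_pow h1
    -- 2π = U + V s
    have h2π : (2:𝓞 K) * π = (U : 𝓞 K) + (V : 𝓞 K) * s := by
      apply hinj
      rw [map_mul, map_add, map_mul, hUK, ← hsKdef, ← hπK, hπA]
      have eV : algebraMap (𝓞 K) K ((V : 𝓞 K)) = A ((V:ℚ)) := by
        rw [map_intCast, map_intCast]
      have e2 : algebraMap (𝓞 K) K ((2:𝓞 K)) = (2:K) := map_ofNat _ 2
      rw [eV, hV, e2]
      have eAx : A (2*x) = 2 * A x := by rw [map_mul]; norm_num
      have eAy : A (2*y) = 2 * A y := by rw [map_mul]; norm_num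
      rw [eAx, eAy]; ring
    obtain ⟨U', hU'⟩ := hpU
    obtain ⟨V', hV'⟩ := hdvdV
    have hfac : (2:𝓞 K) * π = (p : 𝓞 K) * ((U' : 𝓞 K) + (V' : 𝓞 K) * s) := by
      rw [h2π, hU', hV', Int.cast_mul, Int.cast_mul, Int.cast_natCast]; ring
    have hmem : (2:𝓞 K) * π ∈ Pb := by
      rw [hfac]; exact Ideal.mul_mem_right _ _ hpPb
    rcases hPb.mem_or_mem hmem with h2m | hπm
    · -- 2 ∈ Pb, contradiction with p odd
      have hcop2 : IsCoprime (2:ℤ) ((p:ℤ)) := by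
        rw [Int.isCoprime_iff_gcd_eq_one]
        have : p % 2 = 1 := by omega
        rw [Int.gcd]
        simpa [Nat.coprime_comm] using (Nat.coprime_two_left.mpr (Nat.odd_iff.mpr this)).symm
      obtain ⟨a, b, hab⟩ := hcop2
      have h1m : (1:𝓞 K) ∈ Pb := by
        have hcast : ((a * 2 + b * (p:ℤ) : ℤ) : 𝓞 K) = (1:𝓞 K) := by
          rw [hab]; norm_num
        have : ((a:𝓞 K)) * 2 + ((b:𝓞 K)) * (p:𝓞 K) ∈ Pb :=
          Ideal.add_mem _ (Ideal.mul_mem_left _ _ h2m) (Ideal.mul_mem_left _ _ hpPb)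
        rw [← hcast]; push_cast; exact this
      exact hPb.ne_top ((Ideal.eq_top_iff_one Pb).mpr h1m)
    · -- π ∈ Pb leads to P = Pb
      have hle : Ideal.span {π} ≤ Pb := (Ideal.span_singleton_le_iff_mem _).mpr hπm
      rw [hgen] at hle
      have hPle : P ≤ Pb := hPb.le_of_pow_le hle
      exact hPPb (hPmax.eq_of_le hPb.ne_top hPle)
  -- the key integer divisibility
  have hN := core_dvd p d h hp hp4 hd4 hodd U V heqZ hpV
  -- conclude
  rw [← Ideal.Quotient.eq]
  have hmkπ : Ideal.Quotient.mk Pb π = Ideal.Quotient.mk Pb ((U : 𝓞 K)) := by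
    rw [Ideal.Quotient.eq]
    have : -(π' ) = π - (U : 𝓞 K) := by rw [hπ'def]; ring
    have hneg : π - (U : 𝓞 K) ∈ Pb := by rw [← this]; exact Submodule.neg_mem _ hπ'Pb
    exact hneg
  rw [map_pow, hmkπ, ← map_pow, Ideal.Quotient.eq]
  have hrw : ((U:𝓞 K)) ^ ((p-1)/2) - (-(d : 𝓞 K)) ^ ((p-1)/4)
      = ((U ^ ((p-1)/2) - (-(d:ℤ)) ^ ((p-1)/4) : ℤ) : 𝓞 K) := by
    push_cast; ring
  rw [hrw]
  obtain ⟨c, hc⟩ := hN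
  rw [hc]
  push_cast
  exact Ideal.mul_mem_right _ _ hpPb
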